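/- For every natural number n ≥ 1, every monomial k^α·b^β·X^γ·Y^δ occurring in the support of the n-th period polynomial Φ n = Y·(F n) − X·(G n) satisfies: γ is even, δ = 2^n + 1 − γ, and β = 2^{n−1} − γ/2. (That is, Φ n is Y times a polynomial of the form ∑_{i=0}^{2^{n−1}} e_i·X^{2i}·Y^{2^n − 2i}·b^{2^{n−1} − i} with e_i ∈ ℤ[k].) -/

import Mathlib

open MvPolynomial

/-- The pair `(Fₙ, Gₙ)` in `ℤ[k, b, X, Y]` (variables `0 ↦ k`, `1 ↦ b`, `2 ↦ X`, `3 ↦ Y`),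
defined by `F 1 = k (X² + b Y²)`, `G 1 = X Y`,
`F (n+1) = k ((F n)² + b (G n)²)`, `G (n+1) = (F n) (G n)`. -/
noncomputable def FG : ℕ → MvPolynomial (Fin 4) ℤ × MvPolynomial (Fin 4) ℤ
  | 0 => (0, 0)
  | 1 => (X 0 * (X 2 ^ 2 + X 1 * X 3 ^ 2), X 2 * X 3)
  | n + 2 =>
      (X 0 * ((FG (n + 1)).1 ^ 2 + X 1 * (FG (n + 1)).2 ^ 2),
        (FG (n + 1)).1 * (FG (n + 1)).2)

noncomputable def F (n : ℕ) : MvPolynomial (Fin 4) ℤ := (FG n).1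
noncomputable def G (n : ℕ) : MvPolynomial (Fin 4) ℤ := (FG n).2

/-- weight with k ↦ 0, b ↦ 0, X ↦ 1, Y ↦ 1 -/
def w1 : Fin 4 → ℕ := ![0, 0, 1, 1]
/-- weight with k ↦ 0, b ↦ 2, X ↦ 1, Y ↦ 0 -/
def w2 : Fin 4 → ℕ := ![0, 2, 1, 0]

lemma pow_hom {w : Fin 4 → ℕ} {p : MvPolynomial (Fin 4) ℤ} {d : ℕ}
    (h : IsWeightedHomogeneous w p d) : IsWeightedHomogeneous w (p ^ 2) (d + d) := by
  rw [sq]; exact h.mul h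

lemma X_hom {w : Fin 4 → ℕ} (i : Fin 4) {d : ℕ} (h : w i = d) :
    IsWeightedHomogeneous w (X (R := ℤ) i) d := by
  rw [← h]; exact isWeightedHomogeneous_X ℤ w i

lemma FG_hom : ∀ n : ℕ, 1 ≤ n →
    IsWeightedHomogeneous w1 (F n) (2 ^ n) ∧ IsWeightedHomogeneous w2 (F n) (2 ^ n) ∧
    IsWeightedHomogeneous w1 (G n) (2 ^ n) ∧ IsWeightedHomogeneous w2 (G n) (2 ^ n - 1) := by
  intro n hn
  induction n with
  | zero => omega
  | succ n ih =>
    rcases Nat.eq_or_lt_of_le hn with h1 | h1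
    · -- n + 1 = 1
      have hn0 : n = 0 := by omega
      subst hn0
      have hX0w1 : IsWeightedHomogeneous w1 (X (R := ℤ) 0) 0 := X_hom 0 (by norm_num [w1])
      have hX1w1 : IsWeightedHomogeneous w1 (X (R := ℤ) 1) 0 := X_hom 1 (by norm_num [w1])
      have hX2w1 : IsWeightedHomogeneous w1 (X (R := ℤ) 2) 1 := X_hom 2 (by rfl)
      have hX3w1 : IsWeightedHomogeneous w1 (X (R := ℤ) 3) 1 := X_hom 3 (by rfl)
      have hX0w2 : IsWeightedHomogeneous w2 (X (R := ℤ) 0) 0 := X_hom 0 (by norm_num [w2])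
      have hX1w2 : IsWeightedHomogeneous w2 (X (R := ℤ) 1) 2 := X_hom 1 (by norm_num [w2])
      have hX2w2 : IsWeightedHomogeneous w2 (X (R := ℤ) 2) 1 := X_hom 2 (by rfl)
      have hX3w2 : IsWeightedHomogeneous w2 (X (R := ℤ) 3) 0 := X_hom 3 (by rfl)
      refine ⟨?_, ?_, ?_, ?_⟩
      · show IsWeightedHomogeneous w1 (X 0 * (X 2 ^ 2 + X 1 * X 3 ^ 2)) 2
        have := hX0w1.mul ((pow_hom hX2w1).add (by simpa using hX1w1.mul (pow_hom hX3w1)))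
        simpa using this
      · show IsWeightedHomogeneous w2 (X 0 * (X 2 ^ 2 + X 1 * X 3 ^ 2)) 2
        have := hX0w2.mul ((pow_hom hX2w2).add (by simpa using hX1w2.mul (pow_hom hX3w2)))
        simpa using this
      · show IsWeightedHomogeneous w1 (X 2 * X 3) 2
        have := hX2w1.mul hX3w1
        simpa using this
      · show IsWeightedHomogeneous w2 (X 2 * X 3) 1
        have := hX2w2.mul hX3w2
        simpa using this
    · -- n ≥ 1
      have hn1 : 1 ≤ n := by omega
      obtain ⟨hF1, hF2, hG1, hG2⟩ := ih hn1
      have hX0w1 : IsWeightedHomogeneous w1 (X (R := ℤ) 0) 0 := X_hom 0 (by norm_num [w1])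
      have hX1w1 : IsWeightedHomogeneous w1 (X (R := ℤ) 1) 0 := X_hom 1 (by norm_num [w1])
      have hX0w2 : IsWeightedHomogeneous w2 (X (R := ℤ) 0) 0 := X_hom 0 (by norm_num [w2])
      have hX1w2 : IsWeightedHomogeneous w2 (X (R := ℤ) 1) 2 := X_hom 1 (by norm_num [w2])
      obtain ⟨m, hm⟩ : ∃ m, n = m + 1 := ⟨n - 1, by omega⟩
      subst hm
      have hFdef : F (m + 2) = X 0 * (F (m + 1) ^ 2 + X 1 * G (m + 1) ^ 2) := rfl
      have hGdef : G (m + 2) = F (m + 1) * G (m + 1) := rfl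
      have e1 : 2 ^ (m + 1) + 2 ^ (m + 1) = 2 ^ (m + 2) := by ring
      have e2 : 2 ^ (m + 1) - 1 + (2 ^ (m + 1) - 1) + 2 = 2 ^ (m + 2) := by
        have : 1 ≤ 2 ^ (m + 1) := Nat.one_le_two_pow
        omega
      refine ⟨?_, ?_, ?_, ?_⟩
      · rw [hFdef]
        have := hX0w1.mul ((pow_hom hF1).add (by simpa using hX1w1.mul (pow_hom hG1)))
        rw [e1] at this
        simpa using this
      · rw [hFdef]
        have h2 : IsWeightedHomogeneous w2 (X 1 * G (m + 1) ^ 2) (2 ^ (m + 1) + 2 ^ (m + 1)) := by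
          have := hX1w2.mul (pow_hom hG2)
          have e : 2 + (2 ^ (m + 1) - 1 + (2 ^ (m + 1) - 1)) = 2 ^ (m + 1) + 2 ^ (m + 1) := by
            have : 1 ≤ 2 ^ (m + 1) := Nat.one_le_two_pow
            omega
          rwa [e] at this
        have := hX0w2.mul ((pow_hom hF2).add h2)
        rw [e1] at this
        simpa using this
      · rw [hGdef]
        have := hF1.mul hG1
        rwa [e1] at this
      · rw [hGdef]
        have := hF2.mul hG2
        have e : 2 ^ (m + 1) + (2 ^ (m + 1) - 1) = 2 ^ (m + 2) - 1 := by
          have : 1 ≤ 2 ^ (m + 1) := Nat.one_le_two_pow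
          omega
        rwa [e] at this

/-- Every monomial `k^α b^β X^γ Y^δ` in the support of the period polynomial
`Φ n = Y * F n - X * G n` has `γ` even, `δ = 2^n + 1 - γ` and `β = 2^(n-1) - γ/2`. -/
theorem support_Phi_form (n : ℕ) (hn : 1 ≤ n) :
    ∀ m ∈ (X 3 * F n - X 2 * G n).support,
      Even (m 2) ∧ m 3 = 2 ^ n + 1 - m 2 ∧ m 1 = 2 ^ (n - 1) - m 2 / 2 := by
  obtain ⟨hF1, hF2, hG1, hG2⟩ := FG_hom n hn
  have hX2w1 : IsWeightedHomogeneous w1 (X (R := ℤ) 2) 1 := X_hom 2 (by rfl)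
  have hX3w1 : IsWeightedHomogeneous w1 (X (R := ℤ) 3) 1 := X_hom 3 (by rfl)
  have hX2w2 : IsWeightedHomogeneous w2 (X (R := ℤ) 2) 1 := X_hom 2 (by rfl)
  have hX3w2 : IsWeightedHomogeneous w2 (X (R := ℤ) 3) 0 := X_hom 3 (by rfl)
  have hP1 : IsWeightedHomogeneous w1 (X 3 * F n - X 2 * G n) (2 ^ n + 1) := by
    have ha : IsWeightedHomogeneous w1 (X 3 * F n) (2 ^ n + 1) := by
      have := hX3w1.mul hF1; rwa [add_comm] at this
    have hb : IsWeightedHomogeneous w1 (X 2 * G n) (2 ^ n + 1) := by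
      have := hX2w1.mul hG1; rwa [add_comm] at this
    exact (sub_mem (mem_weightedHomogeneousSubmodule ℤ w1 _ _ |>.mpr ha)
      (mem_weightedHomogeneousSubmodule ℤ w1 _ _ |>.mpr hb))
  have hP2 : IsWeightedHomogeneous w2 (X 3 * F n - X 2 * G n) (2 ^ n) := by
    have ha : IsWeightedHomogeneous w2 (X 3 * F n) (2 ^ n) := by
      have := hX3w2.mul hF2; rwa [zero_add] at this
    have hb : IsWeightedHomogeneous w2 (X 2 * G n) (2 ^ n) := by
      have := hX2w2.mul hG2
      have e : 1 + (2 ^ n - 1) = 2 ^ n := by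
        have : 1 ≤ 2 ^ n := Nat.one_le_two_pow
        omega
      rwa [e] at this
    exact (sub_mem (mem_weightedHomogeneousSubmodule ℤ w2 _ _ |>.mpr ha)
      (mem_weightedHomogeneousSubmodule ℤ w2 _ _ |>.mpr hb))
  intro m hm
  rw [mem_support_iff] at hm
  have h1 := hP1 hm
  have h2 := hP2 hm
  rw [Finsupp.weight_apply, Finsupp.sum_fintype _ _ (by intro i; simp)] at h1 h2
  rw [Fin.sum_univ_four] at h1 h2
  simp only [w1, w2, Matrix.cons_val_zero, Matrix.cons_val_one, Matrix.head_cons,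
    Matrix.cons_val_two, Matrix.cons_val_three, Matrix.tail_cons, smul_eq_mul] at h1 h2
  -- h1 : m 0 * 0 + m 1 * 0 + m 2 * 1 + m 3 * 1 = 2 ^ n + 1
  -- h2 : m 0 * 0 + m 1 * 2 + m 2 * 1 + m 3 * 0 = 2 ^ n
  have hpow : 2 ^ n = 2 * 2 ^ (n - 1) := by
    conv_lhs => rw [show n = (n - 1) + 1 by omega]
    ring
  refine ⟨⟨m 1 + 2 ^ (n - 1) - 2 ^ n + m 2 / 2, by omega⟩, by omega, by omega⟩
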